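/- arXiv:0810.4387 — 5 statements merged into one kernel-verified Lean document; each statement's English description precedes it below -/
import Mathlib

section
/- The number of walks of length n = 3m + 2i + j from (0,0) to (i,j) with steps W=(-1,0), N=(0,1), SE=(1,-1), staying in the quarter plane {(a,b) : a ≥ 0, b ≥ 0}, equals (i+1)(j+1)(i+j+2)(3m+2i+j)! / (m!(m+i+1)!(m+i+j+2)!). -/
/-- Number of quarter-plane walks of length `n` with steps in `S`, starting at `(0,0)`,
staying in the quarter plane, and ending at `e`. -/
noncomputable def qwalkCount (S : Set (ℤ × ℤ)) (n : ℕ) (e : ℤ × ℤ) : ℕ :=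
  Nat.card {w : Fin (n + 1) → ℤ × ℤ //
    w 0 = (0, 0) ∧
    (∀ i : Fin n, w i.succ - w i.castSucc ∈ S) ∧
    (∀ i, 0 ≤ (w i).1 ∧ 0 ≤ (w i).2) ∧
    w (Fin.last n) = e}

namespace QWalkAux

def S0 : Set (ℤ × ℤ) := {(-1, 0), (0, 1), (1, -1)}

def stepv : Fin 3 → ℤ × ℤ := ![(-1, 0), (0, 1), (1, -1)]

lemma stepv_mem (k : Fin 3) : stepv k ∈ S0 := by
  fin_cases k <;> simp [stepv, S0]

lemma stepv_inj : Function.Injective stepv := by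
  intro a b h
  fin_cases a <;> fin_cases b <;> first | rfl | simp_all [stepv, Prod.ext_iff]

def IsWalk (n : ℕ) (e : ℤ × ℤ) (w : Fin (n + 1) → ℤ × ℤ) : Prop :=
  w 0 = (0, 0) ∧
    (∀ i : Fin n, w i.succ - w i.castSucc ∈ S0) ∧
    (∀ i, 0 ≤ (w i).1 ∧ 0 ≤ (w i).2) ∧
    w (Fin.last n) = e

instance walkFinite (n : ℕ) (e : ℤ × ℤ) : Finite {w : Fin (n + 1) → ℤ × ℤ // IsWalk n e w} := by
  have : Finite ↥S0 := (((Set.finite_singleton _).insert _).insert _).to_subtype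
  apply Finite.of_injective
    (fun p : {w : Fin (n + 1) → ℤ × ℤ // IsWalk n e w} =>
      fun i : Fin n => (⟨p.1 i.succ - p.1 i.castSucc, p.2.2.1 i⟩ : ↥S0))
  rintro ⟨w₁, h₁⟩ ⟨w₂, h₂⟩ hab
  have hsteps : ∀ i : Fin n, w₁ i.succ - w₁ i.castSucc = w₂ i.succ - w₂ i.castSucc := by
    intro i
    exact Subtype.ext_iff.mp (congrFun hab i)
  have hall : ∀ i : Fin (n + 1), w₁ i = w₂ i := by
    intro i
    induction i using Fin.induction with
    | zero => rw [h₁.1, h₂.1]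
    | succ k ih =>
      have h1 := hsteps k
      rw [ih] at h1
      exact sub_left_inj.mp h1
  exact Subtype.ext (funext hall)

/-- The recursively defined count. -/
def cnt : ℕ → ℤ × ℤ → ℕ
  | 0, e => if e = (0, 0) then 1 else 0
  | n + 1, e =>
    if 0 ≤ e.1 ∧ 0 ≤ e.2 then
      cnt n (e - (-1, 0)) + cnt n (e - (0, 1)) + cnt n (e - (1, -1))
    else 0

lemma cnt_zero (e : ℤ × ℤ) : cnt 0 e = if e = (0, 0) then 1 else 0 := rfl

lemma cnt_succ (n : ℕ) (e : ℤ × ℤ) :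
    cnt (n + 1) e =
      if 0 ≤ e.1 ∧ 0 ≤ e.2 then
        cnt n (e - (-1, 0)) + cnt n (e - (0, 1)) + cnt n (e - (1, -1))
      else 0 := rfl

/-- The snoc bijection. -/
def g (n : ℕ) (e : ℤ × ℤ) (he : 0 ≤ e.1 ∧ 0 ≤ e.2)
    (p : Σ k : Fin 3, {w : Fin (n + 1) → ℤ × ℤ // IsWalk n (e - stepv k) w}) :
    {w : Fin (n + 2) → ℤ × ℤ // IsWalk (n + 1) e w} :=
  ⟨Fin.snoc p.2.1 e, by
    obtain ⟨hw0, hwstep, hwq, hwlast⟩ := p.2.2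
    refine ⟨?_, ?_, ?_, ?_⟩
    · rw [show (0 : Fin (n + 2)) = Fin.castSucc 0 by simp, Fin.snoc_castSucc]
      exact hw0
    · intro i
      induction i using Fin.lastCases with
      | last =>
        rw [Fin.succ_last, Fin.snoc_last, Fin.snoc_castSucc, hwlast]
        have h : e - (e - stepv p.1) = stepv p.1 := by ring
        rw [h]
        exact stepv_mem p.1
      | cast k =>
        rw [Fin.succ_castSucc, Fin.snoc_castSucc, Fin.snoc_castSucc]
        exact hwstep k
    · intro i
      induction i using Fin.lastCases with
      | last => rw [Fin.snoc_last]; exact he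
      | cast k => rw [Fin.snoc_castSucc]; exact hwq k
    · rw [Fin.snoc_last]⟩

lemma g_bij (n : ℕ) (e : ℤ × ℤ) (he : 0 ≤ e.1 ∧ 0 ≤ e.2) :
    Function.Bijective (g n e he) := by
  constructor
  · rintro ⟨k₁, w₁, h₁⟩ ⟨k₂, w₂, h₂⟩ h
    have hsnoc : (Fin.snoc w₁ e : Fin (n + 2) → ℤ × ℤ) = Fin.snoc w₂ e :=
      Subtype.ext_iff.mp h
    have hw : w₁ = w₂ := by
      funext i
      have := congrFun hsnoc i.castSucc
      rwa [Fin.snoc_castSucc, Fin.snoc_castSucc] at this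
    have h1 := h₁.2.2.2
    have h2 := h₂.2.2.2
    rw [hw] at h1
    have hk : k₁ = k₂ := stepv_inj (sub_right_inj.mp (h1.symm.trans h2))
    subst hk
    subst hw
    rfl
  · rintro ⟨w, h0, hstep, hq, hlast⟩
    have hs : w (Fin.last (n + 1)) - w (Fin.castSucc (Fin.last n)) ∈ S0 := by
      have := hstep (Fin.last n)
      rwa [Fin.succ_last] at this
    have : ∃ k : Fin 3, stepv k = w (Fin.last (n + 1)) - w (Fin.castSucc (Fin.last n)) := by
      rcases hs with h | h | h
      · exact ⟨0, by simpa [stepv] using h.symm⟩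
      · exact ⟨1, by simpa [stepv] using h.symm⟩
      · exact ⟨2, by simpa [stepv] using h.symm⟩
    obtain ⟨k, hk⟩ := this
    have hinit : IsWalk n (e - stepv k) (Fin.init w) := by
      refine ⟨?_, ?_, ?_, ?_⟩
      · show w (Fin.castSucc 0) = (0, 0)
        rw [Fin.castSucc_zero]; exact h0
      · intro i
        show w (Fin.castSucc i.succ) - w (Fin.castSucc i.castSucc) ∈ S0
        rw [← Fin.succ_castSucc]
        exact hstep i.castSucc
      · intro i; exact hq _
      · show w (Fin.castSucc (Fin.last n)) = e - stepv k
        rw [hk, ← hlast]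
        ring
    refine ⟨⟨k, ⟨Fin.init w, hinit⟩⟩, ?_⟩
    apply Subtype.ext
    show Fin.snoc (Fin.init w) e = w
    rw [← hlast]
    exact Fin.snoc_init_self w

lemma qwalk_def (n : ℕ) (e : ℤ × ℤ) :
    qwalkCount S0 n e = Nat.card {w : Fin (n + 1) → ℤ × ℤ // IsWalk n e w} := rfl

lemma card_succ (n : ℕ) (e : ℤ × ℤ) (he : 0 ≤ e.1 ∧ 0 ≤ e.2) :
    Nat.card {w : Fin (n + 2) → ℤ × ℤ // IsWalk (n + 1) e w} =
      Nat.card {w : Fin (n + 1) → ℤ × ℤ // IsWalk n (e - stepv 0) w} +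
      Nat.card {w : Fin (n + 1) → ℤ × ℤ // IsWalk n (e - stepv 1) w} +
      Nat.card {w : Fin (n + 1) → ℤ × ℤ // IsWalk n (e - stepv 2) w} := by
  rw [← Nat.card_congr (Equiv.ofBijective _ (g_bij n e he))]
  letI : ∀ k : Fin 3, Fintype {w : Fin (n + 1) → ℤ × ℤ // IsWalk n (e - stepv k) w} :=
    fun k => Fintype.ofFinite _
  rw [Nat.card_eq_fintype_card, Fintype.card_sigma, Fin.sum_univ_three]
  simp [Nat.card_eq_fintype_card]

lemma qwalk_eq_cnt (n : ℕ) (e : ℤ × ℤ) : qwalkCount S0 n e = cnt n e := by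
  induction n generalizing e with
  | zero =>
    rw [qwalk_def, cnt_zero]
    by_cases he : e = (0, 0)
    · subst he
      rw [if_pos rfl, Nat.card_eq_one_iff_unique]
      constructor
      · constructor
        rintro ⟨w₁, h₁⟩ ⟨w₂, h₂⟩
        apply Subtype.ext
        funext i
        have hi : i = 0 := Fin.ext (by omega)
        rw [hi]
        show w₁ 0 = w₂ 0
        rw [h₁.1, h₂.1]
      · exact ⟨⟨fun _ => (0, 0), rfl, fun i => i.elim0, fun _ => ⟨le_refl 0, le_refl 0⟩, rfl⟩⟩
    · rw [if_neg he]
      have : IsEmpty {w : Fin 1 → ℤ × ℤ // IsWalk 0 e w} := by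
        constructor
        rintro ⟨w, h0, _, _, hlast⟩
        exact he (by rw [← hlast, show Fin.last 0 = 0 from rfl, h0])
      exact Nat.card_of_isEmpty
  | succ n ih =>
    rw [qwalk_def, cnt_succ]
    by_cases he : 0 ≤ e.1 ∧ 0 ≤ e.2
    · rw [if_pos he, card_succ n e he, ← qwalk_def, ← qwalk_def, ← qwalk_def, ih, ih, ih]
      rfl
    · rw [if_neg he]
      have : IsEmpty {w : Fin (n + 2) → ℤ × ℤ // IsWalk (n + 1) e w} := by
        constructor
        rintro ⟨w, _, _, hq, hlast⟩
        exact he (by rw [← hlast]; exact hq _)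
      exact Nat.card_of_isEmpty

lemma cnt_neg (n : ℕ) (e : ℤ × ℤ) (h : e.1 < 0 ∨ e.2 < 0) : cnt n e = 0 := by
  cases n with
  | zero =>
    rw [cnt_zero, if_neg]
    rintro rfl
    simp at h
  | succ n =>
    rw [cnt_succ, if_neg]
    rcases h with h | h <;> intro ⟨h1, h2⟩ <;> omega

lemma cnt_big (n : ℕ) : ∀ e : ℤ × ℤ, (n : ℤ) < 2 * e.1 + e.2 → cnt n e = 0 := by
  induction n with
  | zero =>
    intro e h
    rw [cnt_zero, if_neg]
    rintro rfl
    simp at h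
  | succ n ih =>
    intro e h
    rw [cnt_succ]
    split
    · have h1 : cnt n (e - (-1, 0)) = 0 := by
        apply ih
        simp only [Prod.fst_sub, Prod.snd_sub]
        push_cast at h ⊢
        omega
      have h2 : cnt n (e - (0, 1)) = 0 := by
        apply ih
        simp only [Prod.fst_sub, Prod.snd_sub]
        push_cast at h ⊢
        omega
      have h3 : cnt n (e - (1, -1)) = 0 := by
        apply ih
        simp only [Prod.fst_sub, Prod.snd_sub]
        push_cast at h ⊢
        omega
      rw [h1, h2, h3]
    · rfl

lemma key (n : ℕ) : ∀ m i j : ℕ, n = 3 * m + 2 * i + j →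
    cnt n ((i : ℤ), (j : ℤ)) *
      (Nat.factorial m * Nat.factorial (m + i + 1) * Nat.factorial (m + i + j + 2)) =
    (i + 1) * (j + 1) * (i + j + 2) * Nat.factorial n := by
  induction n with
  | zero =>
    intro m i j h
    have hm : m = 0 := by omega
    have hi : i = 0 := by omega
    have hj : j = 0 := by omega
    subst hm; subst hi; subst hj
    rw [cnt_zero]
    norm_num [Nat.factorial]
  | succ n ih =>
    intro m i j h
    rw [cnt_succ, if_pos ⟨Int.natCast_nonneg i, Int.natCast_nonneg j⟩]
    have e1 : ((i : ℤ), (j : ℤ)) - (-1, 0) = (((i + 1 : ℕ) : ℤ), (j : ℤ)) := by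
      simp [Prod.ext_iff]
    have e2 : ((i : ℤ), (j : ℤ)) - (0, 1) = ((i : ℤ), (j : ℤ) - 1) := by
      simp [Prod.ext_iff]
    have e3 : ((i : ℤ), (j : ℤ)) - (1, -1) = ((i : ℤ) - 1, (j : ℤ) + 1) := by
      simp [Prod.ext_iff]
    rw [e1, e2, e3]
    have HA : cnt n (((i + 1 : ℕ) : ℤ), (j : ℤ)) *
        (Nat.factorial m * Nat.factorial (m + i + 1) * Nat.factorial (m + i + j + 2)) =
        m * ((i + 2) * (j + 1) * (i + j + 3)) * Nat.factorial n := by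
      cases m with
      | zero =>
        rw [cnt_big n _ (by push_cast; omega)]
        simp
      | succ m' =>
        have h' := ih m' (i + 1) j (by omega)
        have f1 : m' + (i + 1) + 1 = m' + 1 + i + 1 := by omega
        have f2 : m' + (i + 1) + j + 2 = m' + 1 + i + j + 2 := by omega
        rw [f1, f2] at h'
        have fs : Nat.factorial (m' + 1) = (m' + 1) * Nat.factorial m' := Nat.factorial_succ m'
        rw [fs]
        calc cnt n (((i + 1 : ℕ) : ℤ), (j : ℤ)) *
            ((m' + 1) * Nat.factorial m' * Nat.factorial (m' + 1 + i + 1) *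
              Nat.factorial (m' + 1 + i + j + 2))
            = (m' + 1) * (cnt n (((i + 1 : ℕ) : ℤ), (j : ℤ)) *
              (Nat.factorial m' * Nat.factorial (m' + 1 + i + 1) *
                Nat.factorial (m' + 1 + i + j + 2))) := by ring
          _ = (m' + 1) * ((i + 1 + 1) * (j + 1) * (i + 1 + j + 2) * Nat.factorial n) := by
              rw [h']
          _ = (m' + 1) * ((i + 2) * (j + 1) * (i + j + 3)) * Nat.factorial n := by ring
    have HB : cnt n ((i : ℤ), (j : ℤ) - 1) *
        (Nat.factorial m * Nat.factorial (m + i + 1) * Nat.factorial (m + i + j + 2)) =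
        (m + i + j + 2) * ((i + 1) * j * (i + j + 1)) * Nat.factorial n := by
      cases j with
      | zero =>
        rw [cnt_neg n _ (by right; norm_num)]
        simp
      | succ j' =>
        have h' := ih m i j' (by omega)
        have e' : ((i : ℤ), ((j' + 1 : ℕ) : ℤ) - 1) = ((i : ℤ), (j' : ℤ)) := by
          simp [Prod.ext_iff]
        rw [e']
        have fs : Nat.factorial (m + i + (j' + 1) + 2) =
            (m + i + j' + 3) * Nat.factorial (m + i + j' + 2) := by
          rw [show m + i + (j' + 1) + 2 = m + i + j' + 2 + 1 by omega]
          exact Nat.factorial_succ _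
        rw [fs]
        calc cnt n ((i : ℤ), (j' : ℤ)) *
            (Nat.factorial m * Nat.factorial (m + i + 1) *
              ((m + i + j' + 3) * Nat.factorial (m + i + j' + 2)))
            = (m + i + j' + 3) * (cnt n ((i : ℤ), (j' : ℤ)) *
              (Nat.factorial m * Nat.factorial (m + i + 1) *
                Nat.factorial (m + i + j' + 2))) := by ring
          _ = (m + i + j' + 3) * ((i + 1) * (j' + 1) * (i + j' + 2) * Nat.factorial n) := by
              rw [h']
          _ = (m + i + (j' + 1) + 2) * ((i + 1) * (j' + 1) * (i + (j' + 1) + 1)) *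
                Nat.factorial n := by ring
    have HC : cnt n ((i : ℤ) - 1, (j : ℤ) + 1) *
        (Nat.factorial m * Nat.factorial (m + i + 1) * Nat.factorial (m + i + j + 2)) =
        (m + i + 1) * (i * (j + 2) * (i + j + 2)) * Nat.factorial n := by
      cases i with
      | zero =>
        rw [cnt_neg n _ (by left; norm_num)]
        simp
      | succ i' =>
        have h' := ih m i' (j + 1) (by omega)
        have e' : (((i' + 1 : ℕ) : ℤ) - 1, (j : ℤ) + 1) = ((i' : ℤ), ((j + 1 : ℕ) : ℤ)) := by
          simp [Prod.ext_iff]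
        rw [e']
        have f2 : m + i' + (j + 1) + 2 = m + (i' + 1) + j + 2 := by omega
        rw [f2] at h'
        have fs : Nat.factorial (m + (i' + 1) + 1) =
            (m + i' + 2) * Nat.factorial (m + i' + 1) := by
          rw [show m + (i' + 1) + 1 = m + i' + 1 + 1 by omega]
          exact Nat.factorial_succ _
        rw [fs]
        calc cnt n ((i' : ℤ), ((j + 1 : ℕ) : ℤ)) *
            (Nat.factorial m * ((m + i' + 2) * Nat.factorial (m + i' + 1)) *
              Nat.factorial (m + (i' + 1) + j + 2))
            = (m + i' + 2) * (cnt n ((i' : ℤ), ((j + 1 : ℕ) : ℤ)) *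
              (Nat.factorial m * Nat.factorial (m + i' + 1) *
                Nat.factorial (m + (i' + 1) + j + 2))) := by ring
          _ = (m + i' + 2) * ((i' + 1) * (j + 1 + 1) * (i' + (j + 1) + 2) * Nat.factorial n) := by
              rw [h']
          _ = (m + (i' + 1) + 1) * ((i' + 1) * (j + 2) * ((i' + 1) + j + 2)) *
                Nat.factorial n := by ring
    rw [add_mul, add_mul, HA, HB, HC, Nat.factorial_succ, h]
    ring

end QWalkAux

theorem walks_WNSE_endpoint (m i j : ℕ) :
    qwalkCount {(-1, 0), (0, 1), (1, -1)} (3 * m + 2 * i + j) ((i : ℤ), (j : ℤ)) *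
      (Nat.factorial m * Nat.factorial (m + i + 1) * Nat.factorial (m + i + j + 2)) =
    (i + 1) * (j + 1) * (i + j + 2) * Nat.factorial (3 * m + 2 * i + j) := by
  rw [show ({(-1, 0), (0, 1), (1, -1)} : Set (ℤ × ℤ)) = QWalkAux.S0 from rfl,
    QWalkAux.qwalk_eq_cnt]
  exact QWalkAux.key _ m i j rfl
end

section
/- The number of walks of length 3m from (0,0) back to (0,0) with steps W=(-1,0), N=(0,1), SE=(1,-1) confined to the quarter plane equals 2·(3m)! / (m!(m+1)!(m+2)!). -/
namespace QW

def stepv : Fin 3 → ℤ × ℤ := ![(-1, 0), (0, 1), (1, -1)]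

def SS : Set (ℤ × ℤ) := {(-1, 0), (0, 1), (1, -1)}

lemma stepv_mem (s : Fin 3) : stepv s ∈ SS := by
  fin_cases s <;> simp [stepv, SS]

lemma stepv_inj : Function.Injective stepv := by
  intro a b h
  fin_cases a <;> fin_cases b <;> simp_all [stepv]

def decode (d : ℤ × ℤ) : Fin 3 :=
  if d = (-1, 0) then 0 else if d = (0, 1) then 1 else 2

lemma stepv_decode {d : ℤ × ℤ} (h : d ∈ SS) : stepv (decode d) = d := by
  rcases h with h | h | h <;> subst h <;> simp [decode, stepv]

def ext {n : ℕ} (c : Fin n → Fin 3) : ℕ → Fin 3 :=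
  fun i => if h : i < n then c ⟨i, h⟩ else 0

def pos {n : ℕ} (c : Fin n → Fin 3) (k : Fin (n + 1)) : ℤ × ℤ :=
  ∑ i ∈ Finset.range k.val, stepv (ext c i)

lemma pos_zero {n : ℕ} (c : Fin n → Fin 3) : pos c 0 = (0, 0) := by
  simp [pos, Prod.ext_iff]

lemma pos_succ {n : ℕ} (c : Fin n → Fin 3) (i : Fin n) :
    pos c i.succ = pos c i.castSucc + stepv (c i) := by
  have h1 : (i.succ : Fin (n + 1)).val = i.val + 1 := rfl
  have h2 : (i.castSucc : Fin (n + 1)).val = i.val := rfl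
  simp only [pos, h1, h2, Finset.sum_range_succ]
  congr 1
  simp [ext, i.isLt]

lemma pos_init {n : ℕ} (c : Fin (n + 1) → Fin 3) (k : Fin (n + 1)) :
    pos (Fin.init c) k = pos c k.castSucc := by
  have h2 : (k.castSucc : Fin (n + 2)).val = k.val := rfl
  simp only [pos, h2]
  apply Finset.sum_congr rfl
  intro i hi
  rw [Finset.mem_range] at hi
  have hk := k.isLt
  have hin : i < n := by omega
  have hin2 : i < n + 1 := by omega
  rw [ext, ext, dif_pos hin, dif_pos hin2]
  rfl

def Good {n : ℕ} (e : ℤ × ℤ) (c : Fin n → Fin 3) : Prop :=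
  (∀ k, 0 ≤ (pos c k).1 ∧ 0 ≤ (pos c k).2) ∧ pos c (Fin.last n) = e

/-- DP counting function. -/
def G : ℕ → ℤ × ℤ → ℕ
  | 0, e => if e = (0, 0) then 1 else 0
  | n + 1, e =>
      if 0 ≤ e.1 ∧ 0 ≤ e.2 then
        G n (e - stepv 0) + G n (e - stepv 1) + G n (e - stepv 2)
      else 0

/-- Walks correspond to codes. -/
def walkEquiv (n : ℕ) (e : ℤ × ℤ) :
    {w : Fin (n + 1) → ℤ × ℤ //
      w 0 = (0, 0) ∧
      (∀ i : Fin n, w i.succ - w i.castSucc ∈ SS) ∧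
      (∀ i, 0 ≤ (w i).1 ∧ 0 ≤ (w i).2) ∧
      w (Fin.last n) = e} ≃ {c : Fin n → Fin 3 // Good e c} where
  toFun := fun ⟨w, h0, hs, hn, hl⟩ => by
    refine ⟨fun i => decode (w i.succ - w i.castSucc), ?_⟩
    have key : ∀ k, pos (fun i => decode (w i.succ - w i.castSucc)) k = w k := by
      intro k
      induction k using Fin.induction with
      | zero => rw [pos_zero, h0]
      | succ i ih =>
          rw [pos_succ, ih, stepv_decode (hs i)]
          abel
    exact ⟨fun k => key k ▸ hn k, key (Fin.last n) ▸ hl⟩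
  invFun := fun ⟨c, hc⟩ => by
    refine ⟨pos c, pos_zero c, fun i => ?_, hc.1, hc.2⟩
    rw [pos_succ]
    simpa using stepv_mem (c i)
  left_inv := by
    rintro ⟨w, h0, hs, hn, hl⟩
    apply Subtype.ext
    funext k
    show pos (fun i => decode (w i.succ - w i.castSucc)) k = w k
    induction k using Fin.induction with
    | zero => rw [pos_zero, h0]
    | succ i ih =>
        rw [pos_succ, ih, stepv_decode (hs i)]
        abel
  right_inv := by
    rintro ⟨c, hc⟩
    apply Subtype.ext
    funext i
    show decode (pos c i.succ - pos c i.castSucc) = c i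
    rw [pos_succ]
    have : pos c i.castSucc + stepv (c i) - pos c i.castSucc = stepv (c i) := by abel
    rw [this]
    exact stepv_inj (stepv_decode (stepv_mem (c i)))

/-- Gluing the last step: a map from pairs (last step, shorter walk) to walks. -/
def glue (n : ℕ) (e : ℤ × ℤ) (he : 0 ≤ e.1 ∧ 0 ≤ e.2)
    (x : Σ s : Fin 3, {c : Fin n → Fin 3 // Good (e - stepv s) c}) :
    {c : Fin (n + 1) → Fin 3 // Good e c} := by
  obtain ⟨s, c, hc⟩ := x
  refine ⟨Fin.snoc c s, fun k => ?_, ?_⟩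
  · induction k using Fin.lastCases with
    | last =>
        have h1 : (Fin.last n).succ = Fin.last (n + 1) := rfl
        have h2 := pos_succ (Fin.snoc c s : Fin (n + 1) → Fin 3) (Fin.last n)
        rw [h1] at h2
        have h3 : pos (Fin.init (Fin.snoc c s : Fin (n + 1) → Fin 3)) (Fin.last n)
            = pos (Fin.snoc c s : Fin (n + 1) → Fin 3) (Fin.last n).castSucc :=
          pos_init _ _
        rw [Fin.init_snoc] at h3
        rw [h2, ← h3, hc.2, Fin.snoc_last]
        simpa using he
    | cast k =>
        have h3 : pos (Fin.init (Fin.snoc c s : Fin (n + 1) → Fin 3)) k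
            = pos (Fin.snoc c s : Fin (n + 1) → Fin 3) k.castSucc := pos_init _ _
        rw [Fin.init_snoc] at h3
        rw [← h3]; exact hc.1 k
  · have h1 : (Fin.last n).succ = Fin.last (n + 1) := rfl
    have h2 := pos_succ (Fin.snoc c s : Fin (n + 1) → Fin 3) (Fin.last n)
    rw [h1] at h2
    have h3 : pos (Fin.init (Fin.snoc c s : Fin (n + 1) → Fin 3)) (Fin.last n)
        = pos (Fin.snoc c s : Fin (n + 1) → Fin 3) (Fin.last n).castSucc := pos_init _ _
    rw [Fin.init_snoc] at h3
    rw [h2, ← h3, hc.2, Fin.snoc_last]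
    abel

lemma glue_bijective (n : ℕ) (e : ℤ × ℤ) (he : 0 ≤ e.1 ∧ 0 ≤ e.2) :
    Function.Bijective (glue n e he) := by
  constructor
  · rintro ⟨s1, c1, hc1⟩ ⟨s2, c2, hc2⟩ h
    have hval : (Fin.snoc c1 s1 : Fin (n + 1) → Fin 3) = Fin.snoc c2 s2 :=
      congrArg Subtype.val h
    have hs : s1 = s2 := by
      have := congrFun hval (Fin.last n)
      simpa [Fin.snoc_last] using this
    subst hs
    have hcc : c1 = c2 := by
      have := congrArg Fin.init hval
      rwa [Fin.init_snoc, Fin.init_snoc] at this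
    subst hcc
    rfl
  · rintro ⟨c, hc⟩
    have hgood : Good (e - stepv (c (Fin.last n))) (Fin.init c) := by
      constructor
      · intro k
        rw [pos_init]; exact hc.1 _
      · rw [pos_init]
        have h1 : (Fin.last n).succ = Fin.last (n + 1) := rfl
        have h2 := pos_succ c (Fin.last n)
        rw [h1, hc.2] at h2
        rw [h2]; abel
    refine ⟨⟨c (Fin.last n), Fin.init c, hgood⟩, ?_⟩
    apply Subtype.ext
    exact Fin.snoc_init_self c

lemma card_eq_G (n : ℕ) (e : ℤ × ℤ) :
    Nat.card {c : Fin n → Fin 3 // Good e c} = G n e := by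
  induction n generalizing e with
  | zero =>
      have hpos : ∀ c : Fin 0 → Fin 3, pos c (Fin.last 0) = (0, 0) := fun c => pos_zero c
      by_cases h : e = (0, 0)
      · subst h
        have : ∀ c : Fin 0 → Fin 3, Good (0, 0) c := by
          intro c
          constructor
          · intro k
            have hk : k = 0 := Fin.ext (by omega)
            rw [hk, pos_zero]; exact ⟨le_refl 0, le_refl 0⟩
          · exact hpos c
        haveI : Unique {c : Fin 0 → Fin 3 // Good ((0 : ℤ), (0 : ℤ)) c} :=
          ⟨⟨⟨fun i => i.elim0, this _⟩⟩, fun x => Subtype.ext (funext fun i => i.elim0)⟩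
        simp [Nat.card_unique, G]
      · haveI : IsEmpty {c : Fin 0 → Fin 3 // Good e c} := by
          constructor
          rintro ⟨c, hc⟩
          exact h ((hpos c ▸ hc.2).symm)
        rw [Nat.card_of_isEmpty, G, if_neg h]
  | succ n ih =>
      by_cases he : 0 ≤ e.1 ∧ 0 ≤ e.2
      · classical
        rw [← Nat.card_eq_of_bijective _ (glue_bijective n e he), Nat.card_eq_fintype_card,
          Fintype.card_sigma]
        simp only [← Nat.card_eq_fintype_card, ih]
        rw [Fin.sum_univ_three]
        show _ = G (n + 1) e
        rw [G, if_pos he]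
      · haveI : IsEmpty {c : Fin (n + 1) → Fin 3 // Good e c} := by
          constructor
          rintro ⟨c, hc⟩
          exact he (hc.2 ▸ hc.1 (Fin.last (n + 1)))
        rw [Nat.card_of_isEmpty]
        show (0 : ℕ) = G (n + 1) e
        rw [G, if_neg he]

lemma qwalk_eq_G (n : ℕ) (e : ℤ × ℤ) : qwalkCount SS n e = G n e := by
  rw [qwalkCount, Nat.card_congr (walkEquiv n e), card_eq_G]

/-- Vanishing off the quarter plane. -/
lemma G_neg {n : ℕ} {x y : ℤ} (h : x < 0 ∨ y < 0) : G n (x, y) = 0 := by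
  cases n with
  | zero =>
      rw [G, if_neg]
      intro hxy
      rw [Prod.ext_iff] at hxy
      rcases h with h | h <;> omega
  | succ n =>
      rw [G, if_neg]
      intro hxy
      rcases h with h | h
      · exact absurd hxy.1 (by simpa using h.not_ge)
      · exact absurd hxy.2 (by simpa using h.not_ge)

/-- Vanishing beyond reach. -/
lemma G_far : ∀ (n : ℕ) (x y : ℤ), (n : ℤ) < 2 * x + y → G n (x, y) = 0 := by
  intro n
  induction n with
  | zero =>
      intro x y h
      rw [G, if_neg]
      intro hxy
      rw [Prod.ext_iff] at hxy
      omega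
  | succ n ih =>
      intro x y h
      by_cases he : (0 : ℤ) ≤ x ∧ (0 : ℤ) ≤ y
      · rw [G, if_pos (by simpa using he)]
        have e1 : ((x, y) : ℤ × ℤ) - stepv 0 = (x + 1, y) := by
          simp [stepv, Prod.ext_iff]
        have e2 : ((x, y) : ℤ × ℤ) - stepv 1 = (x, y - 1) := by
          simp [stepv, Prod.ext_iff]
        have e3 : ((x, y) : ℤ × ℤ) - stepv 2 = (x - 1, y + 1) := by
          simp [stepv, Prod.ext_iff]
        rw [e1, e2, e3, ih _ _ (by push_cast at h ⊢; omega),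
          ih _ _ (by push_cast at h ⊢; omega), ih _ _ (by push_cast at h ⊢; omega)]
      · rw [G, if_neg (by simpa using he)]

lemma G_step (n : ℕ) (q p : ℕ) :
    G (n + 1) ((q : ℤ), (p : ℤ)) =
      G n ((q : ℤ) + 1, (p : ℤ)) + G n ((q : ℤ), (p : ℤ) - 1) +
        G n ((q : ℤ) - 1, (p : ℤ) + 1) := by
  rw [G, if_pos (by constructor <;> simp)]
  have e1 : (((q : ℤ), (p : ℤ)) : ℤ × ℤ) - stepv 0 = ((q : ℤ) + 1, (p : ℤ)) := by
    simp [stepv, Prod.ext_iff]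
  have e2 : (((q : ℤ), (p : ℤ)) : ℤ × ℤ) - stepv 1 = ((q : ℤ), (p : ℤ) - 1) := by
    simp [stepv, Prod.ext_iff]
  have e3 : (((q : ℤ), (p : ℤ)) : ℤ × ℤ) - stepv 2 = ((q : ℤ) - 1, (p : ℤ) + 1) := by
    simp [stepv, Prod.ext_iff]
  rw [e1, e2, e3]

/-- The hook-length-formula identity, in cleared-denominator form. -/
lemma G_formula : ∀ (n p q c : ℕ), n = 3 * c + 2 * q + p →
    (G n ((q : ℤ), (p : ℤ)) : ℚ) *
        (Nat.factorial (c + q + p + 2) * Nat.factorial (c + q + 1) * Nat.factorial c) =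
      Nat.factorial n * (p + 1) * (q + 1) * (p + q + 2) := by
  intro n
  induction n with
  | zero =>
      intro p q c h
      obtain ⟨hp, hq, hc⟩ : p = 0 ∧ q = 0 ∧ c = 0 := by omega
      subst hp; subst hq; subst hc
      norm_num [G, Nat.factorial]
  | succ n ih =>
      intro p q c h
      rw [G_step]
      -- Term 1 : G n (q+1, p), shape (c-1, q+1, p)
      have T1 : (G n ((q : ℤ) + 1, (p : ℤ)) : ℚ) *
          (Nat.factorial (c + q + p + 2) * Nat.factorial (c + q + 1) * Nat.factorial c) =
          Nat.factorial n * ((p : ℚ) + 1) * (q + 2) * (p + q + 3) * c := by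
        rcases Nat.eq_zero_or_pos c with hc | hc
        · subst hc
          rw [G_far n ((q : ℤ) + 1) p (by omega)]
          push_cast; ring
        · obtain ⟨c', rfl⟩ : ∃ c', c = c' + 1 := ⟨c - 1, by omega⟩
          have h' := ih p (q + 1) c' (by omega)
          have hco : ((((q + 1 : ℕ)) : ℤ), ((p : ℕ) : ℤ)) = ((q : ℤ) + 1, (p : ℤ)) := by
            rw [Prod.ext_iff]; constructor <;> push_cast <;> ring
          rw [hco] at h'
          have e1 : c' + (q + 1) + p + 2 = c' + 1 + q + p + 2 := by omega
          have e2 : c' + (q + 1) + 1 = c' + 1 + q + 1 := by omega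
          rw [e1, e2] at h'
          have hfc : (Nat.factorial (c' + 1) : ℚ) = ((c' : ℚ) + 1) * Nat.factorial c' := by
            rw [Nat.factorial_succ]; push_cast; ring
          rw [hfc]
          push_cast at h' ⊢
          linear_combination ((c' : ℚ) + 1) * h'
      -- Term 2 : G n (q, p-1), shape (c, q, p-1)
      have T2 : (G n ((q : ℤ), (p : ℤ) - 1) : ℚ) *
          (Nat.factorial (c + q + p + 2) * Nat.factorial (c + q + 1) * Nat.factorial c) =
          Nat.factorial n * (p : ℚ) * (q + 1) * (p + q + 1) * ((c : ℚ) + q + p + 2) := by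
        rcases Nat.eq_zero_or_pos p with hp | hp
        · subst hp
          rw [G_neg (by right; norm_num)]
          push_cast; ring
        · obtain ⟨p', rfl⟩ : ∃ p', p = p' + 1 := ⟨p - 1, by omega⟩
          have h' := ih p' q c (by omega)
          have hco : (((q : ℕ) : ℤ), ((p' : ℕ) : ℤ)) = ((q : ℤ), ((p' + 1 : ℕ) : ℤ) - 1) := by
            rw [Prod.ext_iff]; constructor <;> push_cast <;> ring
          rw [hco] at h'
          have hfa : (Nat.factorial (c + q + (p' + 1) + 2) : ℚ) =
              ((c : ℚ) + q + p' + 3) * Nat.factorial (c + q + p' + 2) := by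
            have e : c + q + (p' + 1) + 2 = (c + q + p' + 2) + 1 := by omega
            rw [e, Nat.factorial_succ]; push_cast; ring
          rw [hfa]
          push_cast at h' ⊢
          linear_combination ((c : ℚ) + q + p' + 3) * h'
      -- Term 3 : G n (q-1, p+1), shape (c, q-1, p+1)
      have T3 : (G n ((q : ℤ) - 1, (p : ℤ) + 1) : ℚ) *
          (Nat.factorial (c + q + p + 2) * Nat.factorial (c + q + 1) * Nat.factorial c) =
          Nat.factorial n * ((p : ℚ) + 2) * q * (p + q + 2) * ((c : ℚ) + q + 1) := by
        rcases Nat.eq_zero_or_pos q with hq | hq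
        · subst hq
          rw [G_neg (by left; norm_num)]
          push_cast; ring
        · obtain ⟨q', rfl⟩ : ∃ q', q = q' + 1 := ⟨q - 1, by omega⟩
          have h' := ih (p + 1) q' c (by omega)
          have hco : (((q' : ℕ) : ℤ), ((p + 1 : ℕ) : ℤ)) =
              (((q' + 1 : ℕ) : ℤ) - 1, (p : ℤ) + 1) := by
            rw [Prod.ext_iff]; constructor <;> push_cast <;> ring
          rw [hco] at h'
          have e1 : c + q' + (p + 1) + 2 = c + (q' + 1) + p + 2 := by omega
          rw [e1] at h'
          have hfb : (Nat.factorial (c + (q' + 1) + 1) : ℚ) =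
              ((c : ℚ) + q' + 2) * Nat.factorial (c + q' + 1) := by
            have e : c + (q' + 1) + 1 = (c + q' + 1) + 1 := by omega
            rw [e, Nat.factorial_succ]; push_cast; ring
          rw [hfb]
          push_cast at h' ⊢
          linear_combination ((c : ℚ) + q' + 2) * h'
      have hfn : (Nat.factorial (n + 1) : ℚ) = ((n : ℚ) + 1) * Nat.factorial n := by
        rw [Nat.factorial_succ]; push_cast; ring
      have hn : ((n : ℚ) + 1) = 3 * c + 2 * q + p := by
        have e : (n : ℚ) + 1 = ((n + 1 : ℕ) : ℚ) := by push_cast; ring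
        rw [e, h]; push_cast; ring
      push_cast at T1 T2 T3 ⊢
      linear_combination T1 + T2 + T3 -
        (((p : ℚ) + 1) * ((q : ℚ) + 1) * ((p : ℚ) + (q : ℚ) + 2)) * hfn -
        ((Nat.factorial n : ℚ) * ((p : ℚ) + 1) * ((q : ℚ) + 1) * ((p : ℚ) + (q : ℚ) + 2)) * hn

end QW

theorem walks_WNSE_origin (m : ℕ) :
    qwalkCount {(-1, 0), (0, 1), (1, -1)} (3 * m) (0, 0) *
      (Nat.factorial m * Nat.factorial (m + 1) * Nat.factorial (m + 2)) =
    2 * Nat.factorial (3 * m) := by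
  have h1 : qwalkCount {(-1, 0), (0, 1), (1, -1)} (3 * m) (0, 0) = QW.G (3 * m) (0, 0) :=
    QW.qwalk_eq_G (3 * m) (0, 0)
  have h2 := QW.G_formula (3 * m) 0 0 m (by ring)
  have e1 : m + 0 + 0 + 2 = m + 2 := by omega
  have e2 : m + 0 + 1 = m + 1 := by omega
  rw [e1, e2] at h2
  have e3 : ((((0 : ℕ) : ℤ), ((0 : ℕ) : ℤ)) : ℤ × ℤ) = ((0, 0) : ℤ × ℤ) := by norm_num
  rw [e3] at h2
  push_cast at h2
  have key : ((qwalkCount {(-1, 0), (0, 1), (1, -1)} (3 * m) (0, 0) *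
      (Nat.factorial m * Nat.factorial (m + 1) * Nat.factorial (m + 2)) : ℕ) : ℚ) =
      ((2 * Nat.factorial (3 * m) : ℕ) : ℚ) := by
    push_cast
    rw [h1]
    linear_combination h2
  exact_mod_cast key
end

section
/- The number of walks of length 2m from (0,0) back to (0,0) with steps E=(1,0), W=(-1,0), NW=(-1,1), SE=(1,-1), confined to the quarter plane, equals 6·(2m)!·(2m+2)! / (m!(m+1)!(m+2)!(m+3)!). -/
def Bf : ℕ → ℤ → ℤ
  | 0, u => if u = 0 then 1 else 0
  | n+1, u => Bf n (u-1) + Bf n (u+1)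

lemma Bf_neg : ∀ (n : ℕ) (u : ℤ), Bf n (-u) = Bf n u := by
  intro n
  induction n with
  | zero => intro u; simp [Bf, neg_eq_zero]
  | succ n ih =>
      intro u
      show Bf n (-u - 1) + Bf n (-u + 1) = Bf n (u-1) + Bf n (u+1)
      rw [show -u - 1 = -(u+1) by ring, show -u + 1 = -(u-1) by ring, ih, ih]
      ring

lemma Bf_gt : ∀ (n : ℕ) (u : ℤ), (n : ℤ) < u → Bf n u = 0 := by
  intro n
  induction n with
  | zero => intro u h; simp [Bf]; omega
  | succ n ih =>
      intro u h
      show Bf n (u-1) + Bf n (u+1) = 0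
      rw [ih (u-1) (by push_cast at h ⊢; omega), ih (u+1) (by push_cast at h ⊢; omega)]
      ring

lemma Bf_choose : ∀ (n j : ℕ), Bf n (2*(j:ℤ) - (n:ℤ)) = (Nat.choose n j : ℤ) := by
  intro n
  induction n with
  | zero =>
      intro j
      cases j with
      | zero => simp [Bf]
      | succ j => simp [Bf]; omega
  | succ n ih =>
      intro j
      show Bf n (2*(j:ℤ) - (n+1:ℕ) - 1) + Bf n (2*(j:ℤ) - (n+1:ℕ) + 1) = _
      cases j with
      | zero =>
          rw [show 2*((0:ℕ):ℤ) - ((n+1:ℕ):ℤ) - 1 = -((n:ℤ)+2) by push_cast; ring]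
          rw [show 2*((0:ℕ):ℤ) - ((n+1:ℕ):ℤ) + 1 = 2*((0:ℕ):ℤ) - (n:ℤ) by push_cast; ring]
          rw [Bf_neg, Bf_gt n ((n:ℤ)+2) (by omega), ih 0]
          simp
      | succ k =>
          rw [show 2*((k+1:ℕ):ℤ) - ((n+1:ℕ):ℤ) - 1 = 2*(k:ℤ) - (n:ℤ) by push_cast; ring]
          rw [show 2*((k+1:ℕ):ℤ) - ((n+1:ℕ):ℤ) + 1 = 2*((k+1:ℕ):ℤ) - (n:ℤ) by push_cast; ring]
          rw [ih k, ih (k+1)]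
          rw [Nat.choose_succ_succ]
          push_cast
          ring

def Ffun (n : ℕ) (x y : ℤ) : ℤ :=
  Bf n (x+2*y) * Bf n x - Bf n (x+2*y+4) * Bf n (x+4) - Bf n (x+2*y+2) * Bf n (x-2)
  + Bf n (x+2*y+6) * Bf n (x+2) - Bf n (x+2*y) * Bf n (x+2) + Bf n (x+2*y+2) * Bf n (x+4)
  + Bf n (x+2*y+4) * Bf n (x-2) - Bf n (x+2*y+6) * Bf n x

lemma F_rec (n : ℕ) (x y : ℤ) :
    Ffun (n+1) x y =
      Ffun n (x-1) y + Ffun n (x+1) y + Ffun n (x+1) (y-1) + Ffun n (x-1) (y+1) := by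
  simp only [Ffun, show ∀ u, Bf (n+1) u = Bf n (u-1) + Bf n (u+1) from fun _ => rfl]
  ring_nf

lemma F_bdx (n : ℕ) (y : ℤ) : Ffun n (-1) y = 0 := by
  simp only [Ffun]
  rw [show (-1:ℤ) - 2 = -3 by norm_num, show (-1:ℤ) + 4 = 3 by norm_num,
    show (-1:ℤ) + 2 = 1 by norm_num, show (-1:ℤ) = -(1:ℤ) by norm_num]
  rw [Bf_neg, Bf_neg]
  ring_nf

lemma F_bdy (n : ℕ) (x : ℤ) : Ffun n x (-1) = 0 := by
  simp only [Ffun]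
  ring_nf

lemma F_zero (x y : ℤ) (hx : 0 ≤ x) (hy : 0 ≤ y) :
    Ffun 0 x y = if x = 0 ∧ y = 0 then 1 else 0 := by
  simp only [Ffun, show ∀ u, Bf 0 u = if u = 0 then 1 else 0 from fun _ => rfl]
  split_ifs <;> omega

def S4 : Finset (ℤ × ℤ) := {(1, 0), (-1, 0), (-1, 1), (1, -1)}

def Cw : ℕ → ℤ × ℤ → ℕ
  | 0, e => if e = (0,0) then 1 else 0
  | n+1, e => if 0 ≤ e.1 ∧ 0 ≤ e.2 then ∑ s ∈ S4, Cw n (e - s) else 0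

lemma sum_S4 {M : Type*} [AddCommMonoid M] (g : ℤ × ℤ → M) :
    ∑ s ∈ S4, g s = g (1,0) + g (-1,0) + g (-1,1) + g (1,-1) := by
  rw [show S4 = insert ((1:ℤ),(0:ℤ)) (insert (-1,0) (insert (-1,1) {(1,-1)})) from rfl]
  rw [Finset.sum_insert (by decide), Finset.sum_insert (by decide),
    Finset.sum_insert (by decide), Finset.sum_singleton]
  ring_nf
  abel

lemma Cw_notQ : ∀ (n : ℕ) (e : ℤ × ℤ), ¬(0 ≤ e.1 ∧ 0 ≤ e.2) → Cw n e = 0 := by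
  intro n e h
  cases n with
  | zero =>
      have he : e ≠ (0,0) := by rintro rfl; exact h ⟨le_refl _, le_refl _⟩
      simp only [Cw, if_neg he]
  | succ n => simp [Cw, h]

lemma Cw_eq_F : ∀ (n : ℕ) (x y : ℤ), 0 ≤ x → 0 ≤ y → (Cw n (x, y) : ℤ) = Ffun n x y := by
  intro n
  induction n with
  | zero =>
      intro x y hx hy
      rw [F_zero x y hx hy]
      simp only [Cw, Prod.mk.injEq]
      split_ifs <;> norm_num
  | succ n ih =>
      intro x y hx hy
      have h1 : (Cw n (x-1, y) : ℤ) = Ffun n (x-1) y := by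
        rcases lt_or_ge x 1 with h | h
        · have hx0 : x = 0 := by omega
          subst hx0
          rw [Cw_notQ n _ (by norm_num)]
          rw [show (0:ℤ)-1 = -1 by norm_num, F_bdx]
          norm_num
        · exact ih (x-1) y (by omega) hy
      have h2 : (Cw n (x+1, y) : ℤ) = Ffun n (x+1) y := ih (x+1) y (by omega) hy
      have h3 : (Cw n (x+1, y-1) : ℤ) = Ffun n (x+1) (y-1) := by
        rcases lt_or_ge y 1 with h | h
        · have hy0 : y = 0 := by omega
          subst hy0
          rw [Cw_notQ n _ (by norm_num)]
          rw [show (0:ℤ)-1 = -1 by norm_num, F_bdy]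
          norm_num
        · exact ih (x+1) (y-1) (by omega) (by omega)
      have h4 : (Cw n (x-1, y+1) : ℤ) = Ffun n (x-1) (y+1) := by
        rcases lt_or_ge x 1 with h | h
        · have hx0 : x = 0 := by omega
          subst hx0
          rw [Cw_notQ n _ (by norm_num)]
          rw [show (0:ℤ)-1 = -1 by norm_num, F_bdx]
          norm_num
        · exact ih (x-1) (y+1) (by omega) (by omega)
      rw [show Cw (n+1) (x,y) = ∑ s ∈ S4, Cw n ((x,y) - s) from by
        simp only [Cw]; rw [if_pos ⟨hx, hy⟩]]
      rw [sum_S4 (fun s => Cw n ((x,y) - s))]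
      simp only [Prod.mk_sub_mk, sub_zero, sub_neg_eq_add]
      push_cast
      rw [h1, h2, h3, h4, F_rec]

abbrev STset : Set (ℤ × ℤ) := {(1, 0), (-1, 0), (-1, 1), (1, -1)}

def Wt (n : ℕ) (e : ℤ × ℤ) : Type :=
  {w : Fin (n + 1) → ℤ × ℤ //
    w 0 = (0, 0) ∧
    (∀ i : Fin n, w i.succ - w i.castSucc ∈ STset) ∧
    (∀ i, 0 ≤ (w i).1 ∧ 0 ≤ (w i).2) ∧
    w (Fin.last n) = e}

lemma mem_S4_iff (s : ℤ × ℤ) : s ∈ S4 ↔ s ∈ STset := by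
  simp [S4, STset]

def walkEquiv (n : ℕ) (e : ℤ × ℤ) (he : 0 ≤ e.1 ∧ 0 ≤ e.2) :
    Wt (n+1) e ≃ Σ s : {s // s ∈ S4}, Wt n (e - s.1) where
  toFun w := ⟨⟨e - w.1 ((Fin.last n).castSucc), by
      rw [mem_S4_iff]
      have h := w.2.2.1 (Fin.last n)
      rwa [Fin.succ_last, w.2.2.2.2] at h⟩,
    ⟨fun i => w.1 i.castSucc, by
      show w.1 (Fin.castSucc 0) = (0,0)
      rw [Fin.castSucc_zero]; exact w.2.1, by
      intro i
      have h := w.2.2.1 i.castSucc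
      rwa [Fin.succ_castSucc] at h, by
      intro i; exact w.2.2.2.1 i.castSucc, by
      show w.1 ((Fin.last n).castSucc) = e - (e - w.1 ((Fin.last n).castSucc))
      rw [sub_sub_cancel]⟩⟩
  invFun p := ⟨Fin.snoc p.2.1 e, by
      show Fin.snoc (α := fun _ : Fin (n+2) => ℤ × ℤ) p.2.1 e (Fin.castSucc 0) = (0,0)
      rw [Fin.snoc_castSucc]; exact p.2.2.1, by
      intro i
      refine Fin.lastCases ?_ ?_ i
      · rw [Fin.succ_last, Fin.snoc_last, Fin.snoc_castSucc, p.2.2.2.2.2, sub_sub_cancel]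
        rw [← mem_S4_iff]; exact p.1.2
      · intro j
        rw [Fin.succ_castSucc, Fin.snoc_castSucc, Fin.snoc_castSucc]
        exact p.2.2.2.1 j, by
      intro i
      refine Fin.lastCases ?_ ?_ i
      · rw [Fin.snoc_last]; exact he
      · intro j; rw [Fin.snoc_castSucc]; exact p.2.2.2.2.1 j, by
      rw [Fin.snoc_last]⟩
  left_inv w := by
    apply Subtype.ext
    show Fin.snoc (fun i => w.1 (Fin.castSucc i)) e = w.1
    have h := Fin.snoc_init_self w.1
    rw [w.2.2.2.2] at h
    exact h
  right_inv p := by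
    obtain ⟨⟨s, hs⟩, w', hw'⟩ := p
    have hval : e - (Fin.snoc w' e : Fin (n+2) → ℤ × ℤ) ((Fin.last n).castSucc) = s := by
      rw [Fin.snoc_castSucc, hw'.2.2.2, sub_sub_cancel]
    refine Sigma.ext (Subtype.ext hval) ?_
    have harr : (fun i : Fin (n+1) => (Fin.snoc w' e : Fin (n+2) → ℤ × ℤ) i.castSucc) = w' := by
      funext i; rw [Fin.snoc_castSucc]
    subst hval
    exact heq_of_eq (Subtype.ext harr)

lemma wt_finite : ∀ (n : ℕ) (e : ℤ × ℤ), Finite (Wt n e) := by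
  intro n
  induction n with
  | zero =>
      intro e
      have : Subsingleton (Wt 0 e) := by
        constructor
        rintro ⟨w, hw⟩ ⟨v, hv⟩
        apply Subtype.ext
        funext i
        show w i = v i
        have hi : i = 0 := by omega
        rw [hi, hw.1, hv.1]
      exact Finite.of_subsingleton
  | succ n ih =>
      intro e
      by_cases he : 0 ≤ e.1 ∧ 0 ≤ e.2
      · haveI : ∀ s : {s // s ∈ S4}, Finite (Wt n (e - s.1)) := fun s => ih _
        exact Finite.of_equiv _ (walkEquiv n e he).symm
      · have : IsEmpty (Wt (n+1) e) := by
          constructor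
          intro w
          exact he (w.2.2.2.2 ▸ w.2.2.2.1 (Fin.last (n+1)))
        exact Finite.of_subsingleton

lemma card_Wt_eq_Cw : ∀ (n : ℕ) (e : ℤ × ℤ), Nat.card (Wt n e) = Cw n e := by
  intro n
  induction n with
  | zero =>
      intro e
      by_cases h : e = (0,0)
      · subst h
        have h1 : Nat.card (Wt 0 ((0:ℤ),(0:ℤ))) = 1 := by
          rw [Nat.card_eq_one_iff_unique]
          constructor
          · constructor
            rintro ⟨w, hw⟩ ⟨v, hv⟩
            apply Subtype.ext; funext i
            show w i = v i
            have hi : i = 0 := by omega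
            rw [hi, hw.1, hv.1]
          · exact ⟨⟨fun _ => (0,0), rfl, fun i => i.elim0,
              fun i => ⟨le_refl _, le_refl _⟩, rfl⟩⟩
        rw [h1]; simp [Cw]
      · haveI : IsEmpty (Wt 0 e) := by
          constructor
          intro w
          apply h
          rw [← w.2.2.2.2]
          exact w.2.1
        rw [Nat.card_of_isEmpty]
        simp only [Cw, if_neg h]
  | succ n ih =>
      intro e
      by_cases he : 0 ≤ e.1 ∧ 0 ≤ e.2
      · haveI : ∀ s : {s // s ∈ S4}, Finite (Wt n (e - s.1)) := fun s => wt_finite _ _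
        haveI : ∀ s : {s // s ∈ S4}, Fintype (Wt n (e - s.1)) := fun s => Fintype.ofFinite _
        rw [Nat.card_congr (walkEquiv n e he), Nat.card_eq_fintype_card,
          Fintype.card_sigma]
        have : ∀ s : {s // s ∈ S4}, Fintype.card (Wt n (e - s.1)) = Cw n (e - s.1) := by
          intro s
          rw [← Nat.card_eq_fintype_card, ih]
        rw [Finset.sum_congr rfl (fun s _ => this s)]
        rw [Finset.sum_coe_sort S4 (fun s => Cw n (e - s))]
        simp [Cw, he]
      · haveI : IsEmpty (Wt (n+1) e) := by
          constructor
          intro w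
          exact he (w.2.2.2.2 ▸ w.2.2.2.1 (Fin.last (n+1)))
        rw [Nat.card_of_isEmpty]
        simp [Cw, he]

lemma qwalk_eq_Cw (n : ℕ) (e : ℤ × ℤ) :
    Nat.card {w : Fin (n + 1) → ℤ × ℤ //
      w 0 = (0, 0) ∧
      (∀ i : Fin n, w i.succ - w i.castSucc ∈ STset) ∧
      (∀ i, 0 ≤ (w i).1 ∧ 0 ≤ (w i).2) ∧
      w (Fin.last n) = e} = Cw n e := card_Wt_eq_Cw n e



set_option maxHeartbeats 2000000 in
lemma F_eval (m : ℕ) :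
    Ffun (2*m) 0 0 =
      ((2*m).choose m : ℤ)^2 - ((2*m).choose (m+1) : ℤ)^2 - ((2*m).choose (m+2) : ℤ)^2
      + 2 * ((2*m).choose (m+1) : ℤ) * ((2*m).choose (m+2) : ℤ)
      + ((2*m).choose (m+1) : ℤ) * ((2*m).choose (m+3) : ℤ)
      - ((2*m).choose m : ℤ) * ((2*m).choose (m+1) : ℤ)
      - ((2*m).choose m : ℤ) * ((2*m).choose (m+3) : ℤ) := by
  have h0 : Bf (2*m) 0 = ((2*m).choose m : ℤ) := by
    have := Bf_choose (2*m) m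
    rwa [show 2*(m:ℤ) - ((2*m:ℕ):ℤ) = 0 by push_cast; ring] at this
  have h2 : Bf (2*m) 2 = ((2*m).choose (m+1) : ℤ) := by
    have := Bf_choose (2*m) (m+1)
    rwa [show 2*((m+1:ℕ):ℤ) - ((2*m:ℕ):ℤ) = 2 by push_cast; ring] at this
  have h4 : Bf (2*m) 4 = ((2*m).choose (m+2) : ℤ) := by
    have := Bf_choose (2*m) (m+2)
    rwa [show 2*((m+2:ℕ):ℤ) - ((2*m:ℕ):ℤ) = 4 by push_cast; ring] at this
  have h6 : Bf (2*m) 6 = ((2*m).choose (m+3) : ℤ) := by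
    have := Bf_choose (2*m) (m+3)
    rwa [show 2*((m+3:ℕ):ℤ) - ((2*m:ℕ):ℤ) = 6 by push_cast; ring] at this
  have hneg : Bf (2*m) (-2) = Bf (2*m) 2 := Bf_neg (2*m) 2
  simp only [Ffun]
  norm_num
  rw [hneg, h0, h2, h4, h6]
  ring

set_option maxHeartbeats 2000000 in
theorem walks_EWNWSE_origin (m : ℕ) :
    qwalkCount {(1, 0), (-1, 0), (-1, 1), (1, -1)} (2 * m) (0, 0) *
      (Nat.factorial m * Nat.factorial (m + 1) * Nat.factorial (m + 2) *
        Nat.factorial (m + 3)) =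
    6 * Nat.factorial (2 * m) * Nat.factorial (2 * m + 2) := by
  have hq : qwalkCount {(1, 0), (-1, 0), (-1, 1), (1, -1)} (2 * m) (0, 0)
      = Cw (2*m) (0,0) := card_Wt_eq_Cw (2*m) (0,0)
  have hE : (Cw (2*m) ((0:ℤ),(0:ℤ)) : ℤ) = Ffun (2*m) 0 0 :=
    Cw_eq_F (2*m) 0 0 (le_refl _) (le_refl _)
  rw [hq]
  suffices hZ : (Cw (2*m) ((0:ℤ),(0:ℤ)) : ℤ) *
      ((Nat.factorial m : ℤ) * (Nat.factorial (m+1) : ℤ) * (Nat.factorial (m+2) : ℤ) *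
        (Nat.factorial (m+3) : ℤ)) =
      6 * (Nat.factorial (2*m) : ℤ) * (Nat.factorial (2*m+2) : ℤ) by
    exact_mod_cast hZ
  rw [hE, F_eval]
  rcases Nat.lt_or_ge m 3 with hm | hm
  · interval_cases m <;> norm_num [Nat.choose, Nat.factorial]
  · obtain ⟨M, rfl⟩ : ∃ M, m = M + 3 := ⟨m - 3, by omega⟩
    have e0 := Nat.cast_choose ℚ (show M+3 ≤ 2*(M+3) by omega)
    rw [show 2*(M+3) - (M+3) = M+3 from by omega] at e0
    have e1 := Nat.cast_choose ℚ (show M+3+1 ≤ 2*(M+3) by omega)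
    rw [show 2*(M+3) - (M+3+1) = M+2 from by omega] at e1
    have e2 := Nat.cast_choose ℚ (show M+3+2 ≤ 2*(M+3) by omega)
    rw [show 2*(M+3) - (M+3+2) = M+1 from by omega] at e2
    have e3 := Nat.cast_choose ℚ (show M+3+3 ≤ 2*(M+3) by omega)
    rw [show 2*(M+3) - (M+3+3) = M from by omega] at e3
    have f1 : ((Nat.factorial (M+1) : ℚ)) = (M+1) * (Nat.factorial M : ℚ) := by
      rw [Nat.factorial_succ]; push_cast; ring
    have f2 : ((Nat.factorial (M+2) : ℚ)) = (M+2) * (Nat.factorial (M+1) : ℚ) := by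
      rw [show M+2 = (M+1)+1 from rfl, Nat.factorial_succ]; push_cast; ring
    have f3 : ((Nat.factorial (M+3) : ℚ)) = (M+3) * (Nat.factorial (M+2) : ℚ) := by
      rw [show M+3 = (M+2)+1 from rfl, Nat.factorial_succ]; push_cast; ring
    have f4 : ((Nat.factorial (M+4) : ℚ)) = (M+4) * (Nat.factorial (M+3) : ℚ) := by
      rw [show M+4 = (M+3)+1 from rfl, Nat.factorial_succ]; push_cast; ring
    have f5 : ((Nat.factorial (M+5) : ℚ)) = (M+5) * (Nat.factorial (M+4) : ℚ) := by
      rw [show M+5 = (M+4)+1 from rfl, Nat.factorial_succ]; push_cast; ring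
    have f6 : ((Nat.factorial (M+6) : ℚ)) = (M+6) * (Nat.factorial (M+5) : ℚ) := by
      rw [show M+6 = (M+5)+1 from rfl, Nat.factorial_succ]; push_cast; ring
    have g8 : ((Nat.factorial (2*(M+3)+2) : ℚ))
        = (2*(M:ℚ)+8) * ((2*(M:ℚ)+7) * (Nat.factorial (2*(M+3)) : ℚ)) := by
      rw [show 2*(M+3)+2 = (2*M+7)+1 from by omega, Nat.factorial_succ,
        show 2*M+7 = (2*(M+3))+1 from by omega, Nat.factorial_succ]
      push_cast; ring
    have hfM : ((Nat.factorial M : ℚ)) ≠ 0 := by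
      exact_mod_cast Nat.factorial_ne_zero M
    have hf2M : ((Nat.factorial (2*(M+3)) : ℚ)) ≠ 0 := by
      exact_mod_cast Nat.factorial_ne_zero (2*(M+3))
    have hQ : ((((2*(M+3)).choose (M+3) : ℚ))^2 - (((2*(M+3)).choose (M+3+1) : ℚ))^2
        - (((2*(M+3)).choose (M+3+2) : ℚ))^2
        + 2 * (((2*(M+3)).choose (M+3+1) : ℚ)) * (((2*(M+3)).choose (M+3+2) : ℚ))
        + (((2*(M+3)).choose (M+3+1) : ℚ)) * (((2*(M+3)).choose (M+3+3) : ℚ))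
        - (((2*(M+3)).choose (M+3) : ℚ)) * (((2*(M+3)).choose (M+3+1) : ℚ))
        - (((2*(M+3)).choose (M+3) : ℚ)) * (((2*(M+3)).choose (M+3+3) : ℚ))) *
        ((Nat.factorial (M+3) : ℚ) * (Nat.factorial (M+4) : ℚ) * (Nat.factorial (M+5) : ℚ) *
          (Nat.factorial (M+6) : ℚ)) =
        6 * (Nat.factorial (2*(M+3)) : ℚ) * (Nat.factorial (2*(M+3)+2) : ℚ) := by
      rw [e0, e1, e2, e3, g8, f6, f5, f4, f3, f2, f1]
      field_simp
      ring
    rw [show M+3+1 = (M+3)+1 from rfl] at hQ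
    exact_mod_cast hQ
end

section
/- Let N(t) be the unique formal power series with N = t(1 + 2N + 4N²). Then N(t) = Σ_{n≥0} t^{n+1} · 2^n · M_n, where M_n = Σ_{k=0}^{⌊n/2⌋} C(n,2k)·C(2k,k)/(k+1) is the n-th Motzkin number. -/
/-- The `n`-th Motzkin number. -/
def motzkin (n : ℕ) : ℕ :=
  ∑ k ∈ Finset.range (n / 2 + 1), n.choose (2 * k) * ((2 * k).choose k / (k + 1))

namespace MotzkinAux

open Finset

/-- Vandermonde-type convolution. -/
lemma vand (r : ℕ) : ∀ m : ℕ, ∀ s : ℕ,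
    ∑ k ∈ range (m+1), k.choose r * (m-k).choose s = (m+1).choose (r+s+1) := by
  intro m
  induction m with
  | zero =>
    intro s
    simp only [zero_add, range_one, sum_singleton, Nat.sub_zero]
    rcases r with _ | r
    · rcases s with _ | s
      · rfl
      · simp [Nat.choose_eq_zero_of_lt]
    · simp [Nat.choose_eq_zero_of_lt, Nat.choose_eq_zero_of_lt (by omega : 1 < r+s+1+1)]
  | succ m ih =>
    intro s
    rw [sum_range_succ, Nat.sub_self]
    rcases s with _ | s
    · have : ∀ k ∈ range (m+1), k.choose r * (m+1-k).choose 0 = k.choose r * (m-k).choose 0 := by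
        intro k _; simp
      rw [sum_congr rfl this, ih 0, Nat.choose_zero_right, mul_one]
      simp only [Nat.add_zero]
      rw [Nat.choose_succ_succ' (m+1) r]
      omega
    · have : ∀ k ∈ range (m+1), k.choose r * (m+1-k).choose (s+1)
          = k.choose r * (m-k).choose s + k.choose r * (m-k).choose (s+1) := by
        intro k hk
        rw [mem_range] at hk
        have h1 : m + 1 - k = (m - k) + 1 := by omega
        rw [h1, Nat.choose_succ_succ', Nat.mul_add]
      rw [sum_congr rfl this, sum_add_distrib, ih s, ih (s+1),
        Nat.choose_eq_zero_of_lt (by omega : 0 < s+1), Nat.mul_zero, Nat.add_zero]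
      have h2 : r + (s+1) + 1 = (r + s + 1) + 1 := by omega
      rw [h2, Nat.choose_succ_succ' (m+1) (r+s+1)]

/-- Triangle reindexing. -/
lemma tri (f : ℕ → ℕ → ℕ) : ∀ Nn : ℕ,
    ∑ i ∈ range Nn, ∑ a ∈ range (i+1), f a (i-a)
      = ∑ a ∈ range Nn, ∑ b ∈ range (Nn-a), f a b := by
  intro Nn
  induction Nn with
  | zero => simp
  | succ Nn ih =>
    rw [sum_range_succ, ih]
    have : ∀ a ∈ range (Nn+1), ∑ b ∈ range (Nn+1-a), f a b
        = ∑ b ∈ range (Nn-a), f a b + f a (Nn-a) := by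
      intro a ha
      rw [mem_range] at ha
      have h1 : Nn + 1 - a = (Nn - a) + 1 := by omega
      rw [h1, sum_range_succ]
    rw [sum_congr rfl this, sum_add_distrib, sum_range_succ (fun a => ∑ b ∈ range (Nn-a), f a b),
      Nat.sub_self]
    simp

/-- Full-range version of the Motzkin numbers. -/
def mz (n : ℕ) : ℕ := ∑ j ∈ range (n+1), n.choose (2*j) * catalan j

lemma motzkin_eq_mz (n : ℕ) : motzkin n = mz n := by
  have h1 : ∀ j : ℕ, (2*j).choose j / (j+1) = catalan j := by
    intro j
    rw [catalan_eq_centralBinom_div]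
    rfl
  simp only [motzkin, mz]
  calc (∑ k ∈ range (n/2+1), n.choose (2*k) * ((2*k).choose k / (k+1)))
      = ∑ k ∈ range (n+1), n.choose (2*k) * ((2*k).choose k / (k+1)) := by
        refine Finset.sum_subset (fun x hx => ?_) (fun x hx hnx => ?_)
        · rw [Finset.mem_range] at *; omega
        · rw [Finset.mem_range] at hx hnx
          rw [Nat.choose_eq_zero_of_lt (by omega), Nat.zero_mul]
    _ = ∑ j ∈ range (n+1), n.choose (2*j) * catalan j :=
        Finset.sum_congr rfl fun j _ => by rw [h1]

lemma catalan_succ_range (n : ℕ) :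
    catalan (n+1) = ∑ a ∈ range (n+1), catalan a * catalan (n-a) := by
  rw [catalan_succ]
  exact Fin.sum_univ_eq_sum_range (fun i => catalan i * catalan (n - i)) (n+1)

lemma mz_rec (n : ℕ) :
    mz (n+2) = mz (n+1) + ∑ k ∈ range (n+1), mz k * mz (n-k) := by
  have hL : mz (n+2)
      = ∑ j ∈ range (n+2), (n+1).choose (2*j+1) * catalan (j+1)
        + (∑ j ∈ range (n+2), (n+1).choose (2*j+2) * catalan (j+1) + 1) := by
    show (∑ j ∈ range (n+2+1), (n+2).choose (2*j) * catalan j) = _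
    rw [Finset.sum_range_succ']
    have : ∀ j ∈ range (n+2), (n+2).choose (2*(j+1)) * catalan (j+1)
        = (n+1).choose (2*j+1) * catalan (j+1) + (n+1).choose (2*j+2) * catalan (j+1) := by
      intro j _
      have h2 : 2*(j+1) = (2*j+1)+1 := by ring
      rw [h2, Nat.choose_succ_succ', Nat.add_mul]
    rw [Finset.sum_congr rfl this, Finset.sum_add_distrib]
    simp only [Nat.mul_zero, Nat.choose_zero_right, catalan_zero, Nat.mul_one, Nat.one_mul]
    omega
  have hM : mz (n+1) = ∑ j ∈ range (n+2), (n+1).choose (2*j+2) * catalan (j+1) + 1 := by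
    show (∑ j ∈ range (n+1+1), (n+1).choose (2*j) * catalan j) = _
    rw [Finset.sum_range_succ']
    rw [Finset.sum_range_succ (fun j => (n+1).choose (2*j+2) * catalan (j+1)) (n+1)]
    rw [Nat.choose_eq_zero_of_lt (show n+1 < 2*(n+1)+2 by omega), Nat.zero_mul, Nat.add_zero]
    have : ∀ j ∈ range (n+1), (n+1).choose (2*(j+1)) * catalan (j+1)
        = (n+1).choose (2*j+2) * catalan (j+1) := by
      intro j _
      have h2 : 2*(j+1) = 2*j+2 := by ring
      rw [h2]
    rw [Finset.sum_congr rfl this]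
    simp
  have hT : ∑ j ∈ range (n+2), (n+1).choose (2*j+1) * catalan (j+1)
      = ∑ a ∈ range (n+2), ∑ b ∈ range (n+2),
          (n+1).choose (2*(a+b)+1) * (catalan a * catalan b) := by
    have h1 : ∀ j ∈ range (n+2), (n+1).choose (2*j+1) * catalan (j+1)
        = ∑ a ∈ range (j+1), (n+1).choose (2*(a+(j-a))+1) * (catalan a * catalan (j-a)) := by
      intro j _
      rw [catalan_succ_range, Finset.mul_sum]
      refine Finset.sum_congr rfl fun a ha => ?_
      rw [mem_range] at ha
      have hj : a + (j - a) = j := by omega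
      rw [hj]
    rw [Finset.sum_congr rfl h1,
      tri (fun a b => (n+1).choose (2*(a+b)+1) * (catalan a * catalan b)) (n+2)]
    refine Finset.sum_congr rfl fun a ha => ?_
    rw [mem_range] at ha
    refine Finset.sum_subset (fun b hb => by rw [mem_range] at *; omega) ?_
    intro b hb hnb
    rw [mem_range] at hb hnb
    rw [Nat.choose_eq_zero_of_lt (by omega), Nat.zero_mul]
  have hR : ∑ k ∈ range (n+1), mz k * mz (n-k)
      = ∑ a ∈ range (n+2), ∑ b ∈ range (n+2),
          (n+1).choose (2*(a+b)+1) * (catalan a * catalan b) := by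
    have hmz : ∀ k, k ≤ n → mz k = ∑ a ∈ range (n+2), k.choose (2*a) * catalan a := by
      intro k hk
      refine Finset.sum_subset (fun a ha => by rw [mem_range] at *; omega) ?_
      intro a ha hna
      rw [mem_range] at ha hna
      rw [Nat.choose_eq_zero_of_lt (by omega), Nat.zero_mul]
    have h1 : ∀ k ∈ range (n+1), mz k * mz (n-k)
        = ∑ a ∈ range (n+2), ∑ b ∈ range (n+2),
            (k.choose (2*a) * (n-k).choose (2*b)) * (catalan a * catalan b) := by
      intro k hk
      rw [mem_range] at hk
      rw [hmz k (by omega), hmz (n-k) (by omega), Finset.sum_mul_sum]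
      exact Finset.sum_congr rfl fun a _ => Finset.sum_congr rfl fun b _ => by ring
    rw [Finset.sum_congr rfl h1, Finset.sum_comm]
    refine Finset.sum_congr rfl fun a _ => ?_
    rw [Finset.sum_comm]
    refine Finset.sum_congr rfl fun b _ => ?_
    rw [← Finset.sum_mul, vand (2*a) n (2*b)]
    have h3 : 2*a + 2*b + 1 = 2*(a+b)+1 := by ring
    rw [h3]
  rw [hL, hT, hR, hM]
  omega

lemma mz_succ (m : ℕ) : mz (m+1) = mz m + ∑ k ∈ range m, mz k * mz (m-1-k) := by
  rcases m with _ | m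
  · simp only [range_zero, Finset.sum_empty, Nat.add_zero]
    show (∑ j ∈ range (0+1+1), Nat.choose (0+1) (2*j) * catalan j)
        = ∑ j ∈ range (0+1), Nat.choose 0 (2*j) * catalan j
    simp [Finset.sum_range_succ, catalan_zero, catalan_one]
  · rw [mz_rec m]
    congr 1

end MotzkinAux

open MotzkinAux in
theorem series_N_eq_two_pow_motzkin (N : PowerSeries ℚ)
    (h0 : PowerSeries.constantCoeff N = 0)
    (hN : N = PowerSeries.X * (1 + 2 * N + 4 * N ^ 2)) :
    ∀ n : ℕ, PowerSeries.coeff (n + 1) N = 2 ^ n * (motzkin n : ℚ) := by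
  have hc0 : PowerSeries.coeff 0 N = 0 := by
    rw [PowerSeries.coeff_zero_eq_constantCoeff]; exact h0
  have key : ∀ n : ℕ, PowerSeries.coeff (n + 1) N = 2 ^ n * (mz n : ℚ) := by
    intro n
    induction n using Nat.strong_induction_on with
    | _ n ih =>
    have hco : PowerSeries.coeff (n+1) N
        = (if n = 0 then (1:ℚ) else 0) + 2 * PowerSeries.coeff n N
          + 4 * ∑ k ∈ Finset.range (n+1),
              PowerSeries.coeff k N * PowerSeries.coeff (n-k) N := by
      conv_lhs => rw [hN]
      rw [PowerSeries.coeff_succ_X_mul, map_add, map_add,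
        show (2 : PowerSeries ℚ) = PowerSeries.C 2 from (map_ofNat _ 2).symm,
        show (4 : PowerSeries ℚ) = PowerSeries.C 4 from (map_ofNat _ 4).symm,
        PowerSeries.coeff_C_mul, PowerSeries.coeff_C_mul, PowerSeries.coeff_one, sq,
        PowerSeries.coeff_mul, Finset.Nat.sum_antidiagonal_eq_sum_range_succ_mk]
    rcases n with _ | m
    · rw [hco]
      simp [hc0, mz]
    · rw [hco]
      have hsum : ∑ k ∈ Finset.range (m+1+1),
            PowerSeries.coeff k N * PowerSeries.coeff (m+1-k) N
          = ∑ k ∈ Finset.range m, (2^k * (mz k:ℚ)) * (2^(m-1-k) * (mz (m-1-k):ℚ)) := by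
        rw [Finset.sum_range_succ', hc0, zero_mul, add_zero, Finset.sum_range_succ]
        have h4 : m + 1 - (m + 1) = 0 := by omega
        rw [h4, hc0, mul_zero, add_zero]
        refine Finset.sum_congr rfl fun k hk => ?_
        rw [Finset.mem_range] at hk
        have e1 : m + 1 - (k+1) = (m-1-k) + 1 := by omega
        rw [e1, ih k (by omega), ih (m-1-k) (by omega)]
      rw [hsum, if_neg (Nat.succ_ne_zero m), ih m (by omega)]
      have hS : (4:ℚ) * ∑ k ∈ Finset.range m, (2^k * (mz k:ℚ)) * (2^(m-1-k) * (mz (m-1-k):ℚ))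
          = 2^(m+1) * ∑ k ∈ Finset.range m, ((mz k:ℚ) * (mz (m-1-k):ℚ)) := by
        rw [Finset.mul_sum, Finset.mul_sum]
        refine Finset.sum_congr rfl fun k hk => ?_
        rw [Finset.mem_range] at hk
        have e1 : (4:ℚ) * (2^k * 2^(m-1-k)) = 2^(m+1) := by
          rw [show (4:ℚ) = 2^2 from by norm_num, ← pow_add, ← pow_add]
          congr 1
          omega
        calc (4:ℚ) * ((2^k * (mz k:ℚ)) * (2^(m-1-k) * (mz (m-1-k):ℚ)))
            = (4 * (2^k * 2^(m-1-k))) * ((mz k:ℚ) * (mz (m-1-k):ℚ)) := by ring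
          _ = _ := by rw [e1]
      rw [mz_succ m]
      push_cast
      rw [mul_add, ← hS]
      ring
  intro n
  rw [key n, motzkin_eq_mz]
end

section
/- Let S(x,y) = x̄ + y + x·ȳ (where x̄ = 1/x, ȳ = 1/y), corresponding to steps W, N, SE. Then the birational involutions Φ(x,y) = (x̄y, y) and Ψ(x,y) = (x, xȳ) both preserve S(x,y), and the group they generate has order 6; the orbit of (x,y) is {(x,y), (x̄y,y), (x̄y,x̄), (ȳ,x̄), (ȳ,xȳ), (x,xȳ)}. -/
noncomputable section

/-- The field ℚ(x,y) of rational functions in two variables. -/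
abbrev Kf := FractionRing (MvPolynomial (Fin 2) ℚ)

/-- The rational function x. -/
noncomputable def xg : Kf := algebraMap (MvPolynomial (Fin 2) ℚ) Kf (MvPolynomial.X 0)

/-- The rational function y. -/
noncomputable def yg : Kf := algebraMap (MvPolynomial (Fin 2) ℚ) Kf (MvPolynomial.X 1)

/-- The step polynomial S(x,y) = x̄ + y + x ȳ (steps W, N, SE). -/
noncomputable def Sfn (p : Kf × Kf) : Kf := p.1⁻¹ + p.2 + p.1 * p.2⁻¹

/-- The involution Φ(x,y) = (x̄ y, y). -/
noncomputable def Phi (p : Kf × Kf) : Kf × Kf := (p.1⁻¹ * p.2, p.2)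

/-- The involution Ψ(x,y) = (x, x ȳ). -/
noncomputable def Psi (p : Kf × Kf) : Kf × Kf := (p.1, p.1 * p.2⁻¹)

lemma hinj : Function.Injective (algebraMap (MvPolynomial (Fin 2) ℚ) Kf) :=
  IsFractionRing.injective _ _

lemma hx0 : xg ≠ 0 := by
  rw [xg, Ne, map_eq_zero_iff _ hinj]
  exact MvPolynomial.X_ne_zero 0

lemma hy0 : yg ≠ 0 := by
  rw [yg, Ne, map_eq_zero_iff _ hinj]
  exact MvPolynomial.X_ne_zero 1

lemma hx2y : xg ^ 2 ≠ yg := by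
  rw [xg, yg, ← map_pow]
  intro h
  have h2 := hinj h
  have := congrArg (MvPolynomial.eval (fun i => if i = 0 then (2:ℚ) else 3)) h2
  simp at this
  norm_num at this

lemma hy2x : yg ^ 2 ≠ xg := by
  rw [xg, yg, ← map_pow]
  intro h
  have h2 := hinj h
  have := congrArg (MvPolynomial.eval (fun i => if i = 0 then (2:ℚ) else 3)) h2
  simp at this
  norm_num at this

lemma hxy1 : xg * yg ≠ 1 := by
  rw [xg, yg, ← map_mul]
  intro h
  rw [show (1:Kf) = algebraMap (MvPolynomial (Fin 2) ℚ) Kf 1 by simp] at h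
  have h2 := hinj h
  have := congrArg (MvPolynomial.eval (fun i => if i = 0 then (2:ℚ) else 3)) h2
  simp at this
  norm_num at this

theorem group_WNSE_order_six :
    (∀ u v : Kf, u ≠ 0 → v ≠ 0 →
      Sfn (Phi (u, v)) = Sfn (u, v) ∧ Sfn (Psi (u, v)) = Sfn (u, v) ∧
      Phi (Phi (u, v)) = (u, v) ∧ Psi (Psi (u, v)) = (u, v)) ∧
    Phi (xg, yg) = (xg⁻¹ * yg, yg) ∧
    Psi (Phi (xg, yg)) = (xg⁻¹ * yg, xg⁻¹) ∧
    Phi (Psi (Phi (xg, yg))) = (yg⁻¹, xg⁻¹) ∧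
    Psi (Phi (Psi (Phi (xg, yg)))) = (yg⁻¹, xg * yg⁻¹) ∧
    Phi (Psi (Phi (Psi (Phi (xg, yg))))) = (xg, xg * yg⁻¹) ∧
    Psi (Phi (Psi (Phi (Psi (Phi (xg, yg)))))) = (xg, yg) ∧
    ({(xg, yg), (xg⁻¹ * yg, yg), (xg⁻¹ * yg, xg⁻¹), (yg⁻¹, xg⁻¹),
        (yg⁻¹, xg * yg⁻¹), (xg, xg * yg⁻¹)} : Set (Kf × Kf)).ncard = 6 := by
  have hx := hx0
  have hy := hy0
  have ha : xg ≠ xg⁻¹ * yg := by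
    intro h; apply hx2y; field_simp at h; linear_combination h
  have hb : xg ≠ yg⁻¹ := by
    intro h; apply hxy1; field_simp at h; linear_combination h
  have hc : yg ≠ xg⁻¹ := by
    intro h; apply hxy1; field_simp at h; linear_combination h
  have hd : yg ≠ xg * yg⁻¹ := by
    intro h; apply hy2x; field_simp at h; linear_combination h
  have he : xg⁻¹ * yg ≠ yg⁻¹ := by
    intro h; apply hy2x; field_simp at h; linear_combination h
  have hf : xg⁻¹ ≠ xg * yg⁻¹ := by
    intro h; apply hx2y; field_simp at h; linear_combination -h
  have e1 : Phi (xg, yg) = (xg⁻¹ * yg, yg) := rfl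
  have e2 : Psi (xg⁻¹ * yg, yg) = (xg⁻¹ * yg, xg⁻¹) := by
    simp only [Psi, Prod.mk.injEq]
    constructor
    all_goals first | trivial | rfl | (field_simp; try ring)
  have e3 : Phi (xg⁻¹ * yg, xg⁻¹) = (yg⁻¹, xg⁻¹) := by
    simp only [Phi, Prod.mk.injEq]
    constructor
    all_goals first | trivial | rfl | (field_simp; try ring)
  have e4 : Psi (yg⁻¹, xg⁻¹) = (yg⁻¹, xg * yg⁻¹) := by
    simp only [Psi, Prod.mk.injEq]
    constructor
    all_goals first | trivial | rfl | (field_simp; try ring)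
  have e5 : Phi (yg⁻¹, xg * yg⁻¹) = (xg, xg * yg⁻¹) := by
    simp only [Phi, Prod.mk.injEq]
    constructor
    all_goals first | trivial | rfl | (field_simp; try ring)
  have e6 : Psi (xg, xg * yg⁻¹) = (xg, yg) := by
    simp only [Psi, Prod.mk.injEq]
    constructor
    all_goals first | trivial | rfl | (field_simp; try ring)
  refine ⟨?_, ?_, ?_, ?_, ?_, ?_, ?_, ?_⟩
  · intro u v hu hv
    refine ⟨?_, ?_, ?_, ?_⟩
    · simp only [Sfn, Phi]; field_simp; ring
    · simp only [Sfn, Psi]; field_simp; ring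
    · simp only [Phi, Prod.mk.injEq]
      constructor
      all_goals first | rfl | trivial | (field_simp)
    · simp only [Psi, Prod.mk.injEq]
      constructor
      all_goals first | rfl | trivial | (field_simp)
  · exact e1
  · rw [e1]; exact e2
  · rw [e1, e2]; exact e3
  · rw [e1, e2, e3]; exact e4
  · rw [e1, e2, e3, e4]; exact e5
  · rw [e1, e2, e3, e4, e5]; exact e6
  · have f1 : ({(xg, xg * yg⁻¹)} : Set (Kf × Kf)).Finite := Set.finite_singleton _
    have f2 := f1.insert (yg⁻¹, xg * yg⁻¹)
    have f3 := f2.insert (yg⁻¹, xg⁻¹)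
    have f4 := f3.insert (xg⁻¹ * yg, xg⁻¹)
    have f5 := f4.insert (xg⁻¹ * yg, yg)
    rw [Set.ncard_insert_of_notMem ?m1 f5,
        Set.ncard_insert_of_notMem ?m2 f4,
        Set.ncard_insert_of_notMem ?m3 f3,
        Set.ncard_insert_of_notMem ?m4 f2,
        Set.ncard_insert_of_notMem ?m5 f1,
        Set.ncard_singleton]
    case m1 =>
      simp only [Set.mem_insert_iff, Set.mem_singleton_iff, Prod.mk.injEq, not_or]
      exact ⟨fun h => ha h.1, fun h => ha h.1, fun h => hb h.1, fun h => hb h.1,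
        fun h => hd h.2⟩
    case m2 =>
      simp only [Set.mem_insert_iff, Set.mem_singleton_iff, Prod.mk.injEq, not_or]
      exact ⟨fun h => hc h.2, fun h => he h.1, fun h => he h.1, fun h => ha h.1.symm⟩
    case m3 =>
      simp only [Set.mem_insert_iff, Set.mem_singleton_iff, Prod.mk.injEq, not_or]
      exact ⟨fun h => he h.1, fun h => he h.1, fun h => hf h.2⟩
    case m4 =>
      simp only [Set.mem_insert_iff, Set.mem_singleton_iff, Prod.mk.injEq, not_or]
      exact ⟨fun h => hf h.2, fun h => hb h.1.symm⟩
    case m5 =>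
      simp only [Set.mem_singleton_iff, Prod.mk.injEq]
      exact fun h => hb h.1.symm

end
end
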